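/- Fix β ∈ ℝ^m with P_D ≠ ∅, let ζ ∈ 𝒞_LP(β) and d ∈ ℝ^ℓ. (i) If ζ + t d ∉ 𝒞_LP(β) for every t > 0, then (z_LP(ζ + t d; β) − z_LP(ζ; β))/t → +∞ as t → 0⁺, i.e. ∇_d z_LP(ζ) = +∞. (ii) Otherwise there exists ε > 0 with ζ + t d ∈ 𝒞_LP(β) for all t ∈ [0, ε], the one-sided directional derivative ∇_d z_LP(ζ) exists and is finite, and ∇_d z_LP(ζ) = max{u·d : u ∈ projOPT(ζ; β)}, the maximum being attained. -/

import Mathlib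

open Matrix Filter Topology Set

noncomputable section

/-- Primal feasibility for the restricted LP with data `(ζ, β)`. -/
def LPfeas {l m nc : ℕ} (CC : Matrix (Fin l) (Fin nc) ℝ) (AC : Matrix (Fin m) (Fin nc) ℝ)
    (ζ : Fin l → ℝ) (β : Fin m → ℝ) (x : Fin nc → ℝ) : Prop :=
  (∀ j, 0 ≤ x j) ∧ CC.mulVec x ≤ ζ ∧ AC.mulVec x = β

/-- The restricted LP value function, taking the value `+∞` when infeasible. -/
def zLP {l m nc : ℕ} (cC : Fin nc → ℝ) (CC : Matrix (Fin l) (Fin nc) ℝ)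
    (AC : Matrix (Fin m) (Fin nc) ℝ) (ζ : Fin l → ℝ) (β : Fin m → ℝ) : EReal :=
  sInf {y : EReal | ∃ x : Fin nc → ℝ, LPfeas CC AC ζ β x ∧ y = ((cC ⬝ᵥ x : ℝ) : EReal)}

/-- The finite domain (feasibility region) of the restricted LP value function. -/
def CLP {l m nc : ℕ} (CC : Matrix (Fin l) (Fin nc) ℝ) (AC : Matrix (Fin m) (Fin nc) ℝ)
    (β : Fin m → ℝ) : Set (Fin l → ℝ) :=
  {ζ | ∃ x : Fin nc → ℝ, LPfeas CC AC ζ β x}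

/-- The dual feasible region `P_D`. -/
def PD {l m nc : ℕ} (cC : Fin nc → ℝ) (CC : Matrix (Fin l) (Fin nc) ℝ)
    (AC : Matrix (Fin m) (Fin nc) ℝ) : Set ((Fin l → ℝ) × (Fin m → ℝ)) :=
  {uv | uv.1 ≤ 0 ∧ CC.transpose.mulVec uv.1 + AC.transpose.mulVec uv.2 ≤ cC}

/-- Projection of the optimal face of the dual LP onto the `u`-coordinates. -/
def projOPT {l m nc : ℕ} (cC : Fin nc → ℝ) (CC : Matrix (Fin l) (Fin nc) ℝ)
    (AC : Matrix (Fin m) (Fin nc) ℝ) (ζ : Fin l → ℝ) (β : Fin m → ℝ) : Set (Fin l → ℝ) :=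
  {u | ∃ v : Fin m → ℝ, (u, v) ∈ PD cC CC AC ∧
    ((ζ ⬝ᵥ u + β ⬝ᵥ v : ℝ) : EReal) = zLP cC CC AC ζ β}

/-- A real vector with natural-number entries. -/
def IsNatVec {r : ℕ} (x : Fin r → ℝ) : Prop := ∀ i, ∃ k : ℕ, x i = (k : ℝ)

/-- The MILP feasible region `X_MO`. -/
def XMO {m nc r : ℕ} (AI : Matrix (Fin m) (Fin r) ℝ) (AC : Matrix (Fin m) (Fin nc) ℝ)
    (b : Fin m → ℝ) : Set ((Fin r → ℝ) × (Fin nc → ℝ)) :=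
  {p | IsNatVec p.1 ∧ (∀ j, 0 ≤ p.2 j) ∧ AI.mulVec p.1 + AC.mulVec p.2 = b}

/-- The restricted feasible region `S(ζ)`. -/
def Sreg {l m nc r : ℕ} (AI : Matrix (Fin m) (Fin r) ℝ) (AC : Matrix (Fin m) (Fin nc) ℝ)
    (b : Fin m → ℝ) (CI : Matrix (Fin l) (Fin r) ℝ) (CC : Matrix (Fin l) (Fin nc) ℝ)
    (ζ : Fin l → ℝ) : Set ((Fin r → ℝ) × (Fin nc → ℝ)) :=
  {p ∈ XMO AI AC b | CI.mulVec p.1 + CC.mulVec p.2 ≤ ζ}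

/-- The restricted value function `z`, taking the value `+∞` when `S(ζ) = ∅`. -/
def zRVF {l m nc r : ℕ} (cI : Fin r → ℝ) (cC : Fin nc → ℝ) (AI : Matrix (Fin m) (Fin r) ℝ)
    (AC : Matrix (Fin m) (Fin nc) ℝ) (b : Fin m → ℝ) (CI : Matrix (Fin l) (Fin r) ℝ)
    (CC : Matrix (Fin l) (Fin nc) ℝ) (ζ : Fin l → ℝ) : EReal :=
  sInf {y : EReal | ∃ p ∈ Sreg AI AC b CI CC ζ, y = ((cI ⬝ᵥ p.1 + cC ⬝ᵥ p.2 : ℝ) : EReal)}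

/-- The finite domain `𝒞` of the restricted value function. -/
def Cdom {l m nc r : ℕ} (AI : Matrix (Fin m) (Fin r) ℝ) (AC : Matrix (Fin m) (Fin nc) ℝ)
    (b : Fin m → ℝ) (CI : Matrix (Fin l) (Fin r) ℝ) (CC : Matrix (Fin l) (Fin nc) ℝ) :
    Set (Fin l → ℝ) :=
  {ζ | (Sreg AI AC b CI CC ζ).Nonempty}

/-- The set `S_I` of integer parts of feasible solutions. -/
def SI {m nc r : ℕ} (AI : Matrix (Fin m) (Fin r) ℝ) (AC : Matrix (Fin m) (Fin nc) ℝ)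
    (b : Fin m → ℝ) : Set (Fin r → ℝ) :=
  {xI | ∃ xC : Fin nc → ℝ, (xI, xC) ∈ XMO AI AC b}

/-- The bounding function `z̄(ζ; x̂_I)`. -/
def zbar {l m nc r : ℕ} (cI : Fin r → ℝ) (cC : Fin nc → ℝ) (AI : Matrix (Fin m) (Fin r) ℝ)
    (AC : Matrix (Fin m) (Fin nc) ℝ) (b : Fin m → ℝ) (CI : Matrix (Fin l) (Fin r) ℝ)
    (CC : Matrix (Fin l) (Fin nc) ℝ) (ζ : Fin l → ℝ) (xI : Fin r → ℝ) : EReal :=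
  ((cI ⬝ᵥ xI : ℝ) : EReal) + zLP cC CC AC (ζ - CI.mulVec xI) (b - AI.mulVec xI)

/-- The set `S*_I(ζ)` of integer parts whose bounding function is active at `ζ`. -/
def SstarI {l m nc r : ℕ} (cI : Fin r → ℝ) (cC : Fin nc → ℝ) (AI : Matrix (Fin m) (Fin r) ℝ)
    (AC : Matrix (Fin m) (Fin nc) ℝ) (b : Fin m → ℝ) (CI : Matrix (Fin l) (Fin r) ℝ)
    (CC : Matrix (Fin l) (Fin nc) ℝ) (ζ : Fin l → ℝ) : Set (Fin r → ℝ) :=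
  {xI ∈ SI AI AC b | zbar cI cC AI AC b CI CC ζ xI = zRVF cI cC AI AC b CI CC ζ}

/-- A description of the restricted value function. -/
def IsDescription {l m nc r : ℕ} (cI : Fin r → ℝ) (cC : Fin nc → ℝ)
    (AI : Matrix (Fin m) (Fin r) ℝ) (AC : Matrix (Fin m) (Fin nc) ℝ) (b : Fin m → ℝ)
    (CI : Matrix (Fin l) (Fin r) ℝ) (CC : Matrix (Fin l) (Fin nc) ℝ)
    (S : Set (Fin r → ℝ)) : Prop :=
  S ⊆ SI AI AC b ∧
  ∀ ζ ∈ Cdom AI AC b CI CC, ∃ xI ∈ S, ∃ xC : Fin nc → ℝ,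
    (xI, xC) ∈ Sreg AI AC b CI CC ζ ∧
    ((cI ⬝ᵥ xI + cC ⬝ᵥ xC : ℝ) : EReal) = zRVF cI cC AI AC b CI CC ζ

/-- A minimal description of the restricted value function. -/
def IsMinimalDescription {l m nc r : ℕ} (cI : Fin r → ℝ) (cC : Fin nc → ℝ)
    (AI : Matrix (Fin m) (Fin r) ℝ) (AC : Matrix (Fin m) (Fin nc) ℝ) (b : Fin m → ℝ)
    (CI : Matrix (Fin l) (Fin r) ℝ) (CC : Matrix (Fin l) (Fin nc) ℝ)
    (S : Set (Fin r → ℝ)) : Prop :=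
  IsDescription cI cC AI AC b CI CC S ∧
  ∀ S' : Set (Fin r → ℝ), S' ⊂ S → ¬ IsDescription cI cC AI AC b CI CC S'

/-- One-sided directional derivative (as a limit in `EReal`). -/
def HasDirDeriv {l : ℕ} (f : (Fin l → ℝ) → EReal) (x d : Fin l → ℝ) (L : EReal) : Prop :=
  Tendsto (fun t : ℝ => ((t⁻¹ : ℝ) : EReal) * (f (x + t • d) - f x)) (𝓝[>] (0 : ℝ)) (𝓝 L)

/-- The criterion-space vector `Cx ∈ ℝ^{ℓ+1}` of a feasible point. -/
def CritVec {l nc r : ℕ} (cI : Fin r → ℝ) (cC : Fin nc → ℝ) (CI : Matrix (Fin l) (Fin r) ℝ)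
    (CC : Matrix (Fin l) (Fin nc) ℝ) (p : (Fin r → ℝ) × (Fin nc → ℝ)) : ℝ × (Fin l → ℝ) :=
  (cI ⬝ᵥ p.1 + cC ⬝ᵥ p.2, CI.mulVec p.1 + CC.mulVec p.2)

/-- Efficient solutions of the multiobjective MILP. -/
def IsEfficient {l m nc r : ℕ} (cI : Fin r → ℝ) (cC : Fin nc → ℝ)
    (AI : Matrix (Fin m) (Fin r) ℝ) (AC : Matrix (Fin m) (Fin nc) ℝ) (b : Fin m → ℝ)
    (CI : Matrix (Fin l) (Fin r) ℝ) (CC : Matrix (Fin l) (Fin nc) ℝ)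
    (p : (Fin r → ℝ) × (Fin nc → ℝ)) : Prop :=
  p ∈ XMO AI AC b ∧ ¬ ∃ q ∈ XMO AI AC b,
    CritVec cI cC CI CC q ≤ CritVec cI cC CI CC p ∧
    CritVec cI cC CI CC q ≠ CritVec cI cC CI CC p

/-- The upper approximation `z̄ᵏ` built from a set `Sk` of integer parts and bound `U`. -/
def zbark {l m nc r : ℕ} (cI : Fin r → ℝ) (cC : Fin nc → ℝ) (AI : Matrix (Fin m) (Fin r) ℝ)
    (AC : Matrix (Fin m) (Fin nc) ℝ) (b : Fin m → ℝ) (CI : Matrix (Fin l) (Fin r) ℝ)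
    (CC : Matrix (Fin l) (Fin nc) ℝ) (Sk : Set (Fin r → ℝ)) (U : ℝ) (ζ : Fin l → ℝ) : EReal :=
  min (sInf {y : EReal | ∃ xI ∈ Sk, y = zbar cI cC AI AC b CI CC ζ xI}) (U : EReal)


section AuxLP
open Finset


theorem conic_caratheodory {n : Type*} [Fintype n] [DecidableEq n] {E : Type*} [AddCommGroup E]
    [Module ℝ E] (a : n → E) :
    ∀ N : ℕ, ∀ w : n → ℝ, (Finset.univ.filter (fun j => w j ≠ 0)).card ≤ N →
    (∀ j, 0 ≤ w j) →
    ∃ (s : Finset n) (w' : n → ℝ), (∀ j, 0 ≤ w' j) ∧ (∀ j ∉ s, w' j = 0) ∧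
      (∑ j, w' j • a j = ∑ j, w j • a j) ∧ LinearIndependent ℝ (fun j : s => a (j : n)) := by
  intro N
  induction N with
  | zero =>
    intro w hcard hw
    have hz : ∀ j, w j = 0 := by
      intro j
      by_contra hj
      have : (Finset.univ.filter (fun j => w j ≠ 0)).Nonempty := ⟨j, by simp [hj]⟩
      have := Finset.card_pos.2 this
      omega
    exact ⟨∅, w, hw, fun j _ => hz j, rfl, linearIndependent_empty_type⟩
  | succ N ih =>
    intro w hcard hw
    classical
    set s := Finset.univ.filter (fun j => w j ≠ 0) with hs
    have hws : ∀ j ∉ s, w j = 0 := by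
      intro j hj; by_contra h; exact hj (by simp [hs, h])
    by_cases hli : LinearIndependent ℝ (fun j : s => a (j : n))
    · exact ⟨_, w, hw, hws, rfl, hli⟩
    obtain ⟨g, hgsum, j₁, hj₁⟩ := Fintype.not_linearIndependent_iff.1 hli
    -- extend ±g to `n` by zero, choosing the sign so that some coefficient is positive
    have key : ∀ c : n → ℝ, (∀ j ∉ s, c j = 0) → (∑ j, c j • a j = 0) → (∃ j, 0 < c j) →
        ∃ (s' : Finset n) (w' : n → ℝ), (∀ j, 0 ≤ w' j) ∧ (∀ j ∉ s', w' j = 0) ∧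
          (∑ j, w' j • a j = ∑ j, w j • a j) ∧ LinearIndependent ℝ (fun j : s' => a (j : n)) := by
      intro c hc0 hcsum hcpos
      have hTne : (Finset.univ.filter (fun j => 0 < c j)).Nonempty := by
        obtain ⟨j, hj⟩ := hcpos; exact ⟨j, by simp [hj]⟩
      obtain ⟨j₀, hj₀T, hj₀min⟩ := Finset.exists_min_image _ (fun j => w j / c j) hTne
      have hcj₀ : 0 < c j₀ := by simpa using hj₀T
      set τ := w j₀ / c j₀ with hτ
      have hτ0 : 0 ≤ τ := div_nonneg (hw j₀) hcj₀.le
      set w'' : n → ℝ := fun j => w j - τ * c j with hw''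
      have hw''nn : ∀ j, 0 ≤ w'' j := by
        intro j
        rcases le_or_gt (c j) 0 with h | h
        · have : τ * c j ≤ 0 := mul_nonpos_of_nonneg_of_nonpos hτ0 h
          simp only [hw'']; linarith [hw j]
        · have hmin := hj₀min j (by simp [h])
          have : τ * c j ≤ w j := by
            rw [hτ]
            calc w j₀ / c j₀ * c j ≤ w j / c j * c j := by
                  apply mul_le_mul_of_nonneg_right hmin h.le
            _ = w j := div_mul_cancel₀ _ h.ne'
          simp only [hw'']; linarith
      have hj₀s : j₀ ∈ s := by
        by_contra h; rw [hc0 j₀ h] at hcj₀; exact lt_irrefl _ hcj₀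
      have hsupp : ∀ j, w'' j ≠ 0 → j ∈ s.erase j₀ := by
        intro j hj
        rcases eq_or_ne j j₀ with rfl | hne
        · exfalso; apply hj; simp only [hw'', hτ]
          field_simp; ring
        · refine Finset.mem_erase.2 ⟨hne, ?_⟩
          by_contra h
          exact hj (by simp [hw'', hws j h, hc0 j h])
      have hcard' : (Finset.univ.filter (fun j => w'' j ≠ 0)).card ≤ N := by
        have h1 : (Finset.univ.filter (fun j => w'' j ≠ 0)) ⊆ s.erase j₀ := by
          intro j hj; exact hsupp j (by simpa using hj)
        have h2 := Finset.card_le_card h1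
        have h3 : (s.erase j₀).card = s.card - 1 := Finset.card_erase_of_mem hj₀s
        have h4 : 1 ≤ s.card := Finset.card_pos.2 ⟨j₀, hj₀s⟩
        omega
      have hsum' : ∑ j, w'' j • a j = ∑ j, w j • a j := by
        simp only [hw'', sub_smul, Finset.sum_sub_distrib, mul_smul]
        rw [← Finset.smul_sum, hcsum, smul_zero, sub_zero]
      obtain ⟨s', w', h1, h2, h3, h4⟩ := ih w'' hcard' hw''nn
      exact ⟨s', w', h1, h2, h3.trans hsum', h4⟩
    set c : n → ℝ := fun j => if hj : j ∈ s then g ⟨j, hj⟩ else 0 with hc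
    have hc0 : ∀ j ∉ s, c j = 0 := fun j hj => by simp [hc, hj]
    have hcsum : ∑ j, c j • a j = 0 := by
      rw [← Finset.sum_subset s.subset_univ (fun x _ hx => by rw [hc0 x hx, zero_smul])]
      rw [← Finset.sum_attach s (fun j => c j • a j)]
      rw [← hgsum]
      apply Finset.sum_congr rfl
      intro j _
      congr 1
      simp [hc, j.2]
    rcases em (∃ j, 0 < c j) with h | h
    · exact key c hc0 hcsum h
    · push_neg at h
      have hc' : ∃ j, 0 < -c j := by
        refine ⟨(j₁ : n), ?_⟩
        have : c (j₁ : n) = g j₁ := by simp [hc, j₁.2]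
        have hne : c (j₁ : n) ≠ 0 := by rw [this]; exact hj₁
        have := h (j₁ : n)
        simp only [neg_pos]
        exact lt_of_le_of_ne this hne
      refine key (fun j => -c j) (fun j hj => by simp [hc0 j hj]) ?_ hc'
      simp only [neg_smul, Finset.sum_neg_distrib, hcsum, neg_zero]

theorem cone_isClosed {n : Type*} [Fintype n] [DecidableEq n] {E : Type*} [NormedAddCommGroup E]
    [NormedSpace ℝ E] [FiniteDimensional ℝ E] (a : n → E) :
    IsClosed {z : E | ∃ w : n → ℝ, (∀ j, 0 ≤ w j) ∧ z = ∑ j, w j • a j} := by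
  classical
  have heq : {z : E | ∃ w : n → ℝ, (∀ j, 0 ≤ w j) ∧ z = ∑ j, w j • a j} =
      ⋃ s : Finset n, ⋃ (_ : LinearIndependent ℝ (fun j : s => a (j : n))),
        (fun w : s → ℝ => ∑ j : s, w j • a (j : n)) '' {w | ∀ j, 0 ≤ w j} := by
    ext z
    simp only [Set.mem_setOf_eq, Set.mem_iUnion, Set.mem_image]
    constructor
    · rintro ⟨w, hw, rfl⟩
      obtain ⟨s, w', h1, h2, h3, h4⟩ := conic_caratheodory a
        (Finset.univ.filter (fun j => w j ≠ 0)).card w le_rfl hw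
      refine ⟨s, h4, fun j => w' j, fun j => h1 j, ?_⟩
      rw [← h3, ← Finset.sum_subset s.subset_univ (fun x _ hx => by rw [h2 x hx, zero_smul])]
      exact (Finset.sum_attach s (fun j => w' j • a j))
    · rintro ⟨s, hli, w, hw, rfl⟩
      refine ⟨fun j => if hj : j ∈ s then w ⟨j, hj⟩ else 0, fun j => ?_, ?_⟩
      · simp only []
        split
        · exact hw _
        · exact le_rfl
      · rw [← Finset.sum_subset s.subset_univ (fun x _ hx => by simp [hx]),
          ← Finset.sum_attach s]
        apply Finset.sum_congr rfl
        intro j _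
        simp [j.2]
  rw [heq]
  apply isClosed_iUnion_of_finite
  intro s
  apply isClosed_iUnion_of_finite
  intro hli
  set T : (s → ℝ) →ₗ[ℝ] E :=
    { toFun := fun w => ∑ j : s, w j • a (j : n)
      map_add' := by intro x y; simp [add_smul, Finset.sum_add_distrib]
      map_smul' := by intro c x; simp [mul_smul, Finset.smul_sum] } with hT
  have hker : LinearMap.ker T = ⊥ := by
    rw [LinearMap.ker_eq_bot']
    intro w hwz
    funext j
    exact Fintype.linearIndependent_iff.1 hli w hwz j
  have hce := LinearMap.isClosedEmbedding_of_injective (f := T) hker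
  have hclosed : IsClosed {w : s → ℝ | ∀ j, 0 ≤ w j} := by
    have : {w : s → ℝ | ∀ j, 0 ≤ w j} = ⋂ j, {w | 0 ≤ w j} := by ext; simp [Set.mem_iInter]
    rw [this]
    exact isClosed_iInter fun j => isClosed_le continuous_const (continuous_apply j)
  exact hce.isClosedMap _ hclosed

/-- Farkas' lemma. -/
theorem farkas {m n : Type*} [Fintype m] [Fintype n] [DecidableEq n] [DecidableEq m]
    (A : Matrix m n ℝ) (b : m → ℝ)
    (h : ¬ ∃ x : n → ℝ, (∀ j, 0 ≤ x j) ∧ A.mulVec x = b) :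
    ∃ y : m → ℝ, (∀ j, 0 ≤ Matrix.vecMul y A j) ∧ b ⬝ᵥ y < 0 := by
  classical
  set E := EuclideanSpace ℝ m
  set L := (WithLp.linearEquiv 2 ℝ (m → ℝ)).symm with hL
  set a : n → E := fun j => L (fun i => A i j) with ha
  set K : ConvexCone ℝ E :=
    { carrier := {z : E | ∃ w : n → ℝ, (∀ j, 0 ≤ w j) ∧ z = ∑ j, w j • a j}
      smul_mem' := by
        rintro c hc z ⟨w, hw, rfl⟩
        exact ⟨fun j => c * w j, fun j => mul_nonneg hc.le (hw j), by
          simp [Finset.smul_sum, mul_smul]⟩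
      add_mem' := by
        rintro z ⟨w, hw, rfl⟩ z' ⟨w', hw', rfl⟩
        exact ⟨fun j => w j + w' j, fun j => add_nonneg (hw j) (hw' j), by
          simp [add_smul, Finset.sum_add_distrib]⟩ } with hK
  have hne : (K : Set E).Nonempty := ⟨0, ⟨0, fun j => le_rfl, by simp⟩⟩
  have hcl : IsClosed (K : Set E) := cone_isClosed a
  have hbK : L b ∉ K := by
    rintro ⟨w, hw, hsum⟩
    apply h
    refine ⟨w, hw, ?_⟩
    have key : L (A.mulVec w) = L b := by
      rw [hsum]
      show L (A.mulVec w) = (∑ j, w j • a j)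
      rw [ha]
      simp only [← _root_.map_smul, ← map_sum]
      congr 1
      funext i
      simp [Matrix.mulVec, dotProduct, Finset.sum_apply, mul_comm]
    exact L.injective key
  obtain ⟨y, hy1, hy2⟩ := ProperCone.hyperplane_separation' (E := E)
    ({ carrier := (K : Set E)
       add_mem' := fun ha hb => K.add_mem ha hb
       zero_mem' := ⟨0, fun _ => le_rfl, by simp⟩
       smul_mem' := by
         rintro c z ⟨w, hw, rfl⟩
         exact ⟨fun j => c * w j, fun j => mul_nonneg c.2 (hw j), by
           simp [Finset.smul_sum, mul_smul, NNReal.smul_def]⟩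
       isClosed' := hcl } : ProperCone ℝ E) hbK
  refine ⟨fun i => y i, fun j => ?_, ?_⟩
  · have haj : a j ∈ K := ⟨fun k => if k = j then 1 else 0, fun k => by positivity, by
      rw [Finset.sum_eq_single j (fun k _ hk => by simp [hk]) (by simp)]; simp⟩
    have := hy1 _ haj
    rw [PiLp.inner_apply] at this
    simpa [ha, Matrix.vecMul, dotProduct, hL, RCLike.inner_apply, conj_trivial,
      mul_comm] using this
  · rw [PiLp.inner_apply] at hy2
    simpa [dotProduct, hL, RCLike.inner_apply, conj_trivial, mul_comm] using hy2

theorem weak_duality {m n : Type*} [Fintype m] [Fintype n]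
    {A : Matrix m n ℝ} {b : m → ℝ} {c : n → ℝ} {x : n → ℝ} {y : m → ℝ}
    (hx0 : ∀ j, 0 ≤ x j) (hxA : A.mulVec x = b) (hy : ∀ j, Matrix.vecMul y A j ≤ c j) :
    b ⬝ᵥ y ≤ c ⬝ᵥ x := by
  have h1 : b ⬝ᵥ y = Matrix.vecMul y A ⬝ᵥ x := by
    rw [← hxA, dotProduct_comm, dotProduct_mulVec]
  rw [h1]
  exact Finset.sum_le_sum fun j _ => mul_le_mul_of_nonneg_right (hy j) (hx0 j)

theorem strong_duality {m n : Type*} [Fintype m] [Fintype n] [DecidableEq m] [DecidableEq n]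
    (A : Matrix m n ℝ) (b : m → ℝ) (c : n → ℝ)
    (hP : ∃ x : n → ℝ, (∀ j, 0 ≤ x j) ∧ A.mulVec x = b)
    (hD : ∃ y : m → ℝ, ∀ j, Matrix.vecMul y A j ≤ c j) :
    ∃ (x : n → ℝ) (y : m → ℝ), ((∀ j, 0 ≤ x j) ∧ A.mulVec x = b) ∧
      (∀ j, Matrix.vecMul y A j ≤ c j) ∧ c ⬝ᵥ x = b ⬝ᵥ y := by
  classical
  -- Big system: variables (x, y⁺, y⁻, s, σ), rows (m, n, Unit)
  set M : Matrix (m ⊕ n ⊕ Unit) (n ⊕ m ⊕ m ⊕ n ⊕ Unit) ℝ := fun i j =>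
    match i, j with
    | Sum.inl i, Sum.inl j => A i j
    | Sum.inl _, Sum.inr _ => 0
    | Sum.inr (Sum.inl j), Sum.inl _ => 0
    | Sum.inr (Sum.inl j), Sum.inr (Sum.inl k) => A k j
    | Sum.inr (Sum.inl j), Sum.inr (Sum.inr (Sum.inl k)) => -A k j
    | Sum.inr (Sum.inl j), Sum.inr (Sum.inr (Sum.inr (Sum.inl j'))) => if j = j' then 1 else 0
    | Sum.inr (Sum.inl j), Sum.inr (Sum.inr (Sum.inr (Sum.inr _))) => 0
    | Sum.inr (Sum.inr _), Sum.inl j => c j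
    | Sum.inr (Sum.inr _), Sum.inr (Sum.inl k) => -b k
    | Sum.inr (Sum.inr _), Sum.inr (Sum.inr (Sum.inl k)) => b k
    | Sum.inr (Sum.inr _), Sum.inr (Sum.inr (Sum.inr (Sum.inl _))) => 0
    | Sum.inr (Sum.inr _), Sum.inr (Sum.inr (Sum.inr (Sum.inr _))) => 1
    with hM
  set r : m ⊕ n ⊕ Unit → ℝ := Sum.elim b (Sum.elim c (fun _ => 0)) with hr
  by_cases hbig : ∃ X : (n ⊕ m ⊕ m ⊕ n ⊕ Unit) → ℝ, (∀ j, 0 ≤ X j) ∧ M.mulVec X = r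
  · obtain ⟨X, hX0, hXM⟩ := hbig
    set x := fun j => X (Sum.inl j) with hx
    set yp := fun k => X (Sum.inr (Sum.inl k)) with hyp
    set ym := fun k => X (Sum.inr (Sum.inr (Sum.inl k))) with hym
    set s := fun j => X (Sum.inr (Sum.inr (Sum.inr (Sum.inl j)))) with hss
    set σ := X (Sum.inr (Sum.inr (Sum.inr (Sum.inr ())))) with hσ
    set y := fun k => yp k - ym k with hy
    have hrow1 : ∀ i, A.mulVec x i = b i := by
      intro i
      have := congrFun hXM (Sum.inl i)
      simpa [hM, Matrix.mulVec, dotProduct, Fintype.sum_sum_type, hr] using this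
    have hrow2 : ∀ j, Matrix.vecMul y A j + s j = c j := by
      intro j
      have := congrFun hXM (Sum.inr (Sum.inl j))
      simp only [hM, Matrix.mulVec, dotProduct, Fintype.sum_sum_type, hr] at this
      simp only [zero_mul, Finset.sum_const_zero, zero_add, add_zero, ite_mul, one_mul,
        Sum.elim_inr, Sum.elim_inl, Finset.sum_ite_eq, Finset.mem_univ, if_true, neg_mul,
        Finset.sum_neg_distrib] at this
      simp only [Matrix.vecMul, dotProduct, hy]
      have e1 : ∑ x : m, (yp x - ym x) * A x j =
          ∑ x : m, A x j * X (Sum.inr (Sum.inl x))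
            - ∑ x : m, A x j * X (Sum.inr (Sum.inr (Sum.inl x))) := by
        rw [← Finset.sum_sub_distrib]
        apply Finset.sum_congr rfl
        intro k _
        simp only [hyp, hym]
        ring
      rw [e1, hss]
      linarith [this]
    have hrow3 : c ⬝ᵥ x - b ⬝ᵥ y + σ = 0 := by
      have := congrFun hXM (Sum.inr (Sum.inr ()))
      simp only [hM, Matrix.mulVec, dotProduct, Fintype.sum_sum_type, hr,
        zero_mul, Finset.sum_const_zero, zero_add, add_zero, neg_mul,
        Finset.sum_neg_distrib, Sum.elim_inr, Sum.elim_inl, one_mul,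
        Fintype.univ_punit, Finset.sum_singleton] at this
      simp only [dotProduct, hy, hx, hσ]
      have e1 : ∑ k : m, b k * (yp k - ym k) =
          ∑ k : m, b k * X (Sum.inr (Sum.inl k)) - ∑ k : m, b k * X (Sum.inr (Sum.inr (Sum.inl k))) := by
        rw [← Finset.sum_sub_distrib]
        apply Finset.sum_congr rfl
        intro k _
        simp only [hyp, hym]
        ring
      rw [e1]
      linarith [this]
    have hxfeas : (∀ j, 0 ≤ x j) ∧ A.mulVec x = b := ⟨fun j => hX0 _, funext hrow1⟩
    have hyfeas : ∀ j, Matrix.vecMul y A j ≤ c j := by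
      intro j
      have := hrow2 j
      have hs := hX0 (Sum.inr (Sum.inr (Sum.inr (Sum.inl j))))
      have : Matrix.vecMul y A j = c j - s j := by linarith [hrow2 j]
      rw [this]
      simp only [hss]
      linarith [hs]
    have hle : c ⬝ᵥ x ≤ b ⬝ᵥ y := by
      have hσ0 := hX0 (Sum.inr (Sum.inr (Sum.inr (Sum.inr ()))))
      rw [← hσ] at hσ0
      linarith [hrow3]
    have hge := weak_duality hxfeas.1 hxfeas.2 hyfeas
    exact ⟨x, y, hxfeas, hyfeas, le_antisymm hle hge⟩
  · exfalso
    obtain ⟨Y, hY1, hY2⟩ := farkas M r hbig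
    set p := fun i => Y (Sum.inl i) with hp
    set q := fun j => Y (Sum.inr (Sum.inl j)) with hq
    set lam := Y (Sum.inr (Sum.inr ())) with hlam
    have hcol1 : ∀ j : n, 0 ≤ ∑ i, p i * A i j + lam * c j := by
      intro j
      have := hY1 (Sum.inl j)
      simpa [hM, Matrix.vecMul, dotProduct, Fintype.sum_sum_type, hp, hq, hlam] using this
    have hcol2 : ∀ k : m, 0 ≤ ∑ j, q j * A k j - lam * b k := by
      intro k
      have := hY1 (Sum.inr (Sum.inl k))
      simpa [hM, Matrix.vecMul, dotProduct, Fintype.sum_sum_type, hp, hq, hlam] using this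
    have hcol3 : ∀ k : m, 0 ≤ -∑ j, q j * A k j + lam * b k := by
      intro k
      have := hY1 (Sum.inr (Sum.inr (Sum.inl k)))
      simpa [hM, Matrix.vecMul, dotProduct, Fintype.sum_sum_type, hp, hq, hlam,
        Finset.sum_neg_distrib] using this
    have hcol4 : ∀ j : n, 0 ≤ q j := by
      intro j
      have := hY1 (Sum.inr (Sum.inr (Sum.inr (Sum.inl j))))
      simpa [hM, Matrix.vecMul, dotProduct, Fintype.sum_sum_type, hp, hq, hlam] using this
    have hcol5 : 0 ≤ lam := by
      have := hY1 (Sum.inr (Sum.inr (Sum.inr (Sum.inr ()))))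
      simpa [hM, Matrix.vecMul, dotProduct, Fintype.sum_sum_type, hp, hq, hlam] using this
    have hobj : b ⬝ᵥ p + c ⬝ᵥ q < 0 := by
      have := hY2
      simp only [dotProduct, hr, Fintype.sum_sum_type, Sum.elim_inl, Sum.elim_inr,
        zero_mul, Finset.sum_const_zero, add_zero] at this ⊢
      simpa [hp, hq] using this
    have hAq : ∀ k, ∑ j, q j * A k j = lam * b k := by
      intro k
      have h1 := hcol2 k
      have h2 := hcol3 k
      linarith
    obtain ⟨x₀, hx₀0, hx₀A⟩ := hP
    obtain ⟨y₀, hy₀⟩ := hD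
    rcases lt_or_eq_of_le hcol5 with hpos | hzero
    · -- λ > 0 : build primal/dual pair violating weak duality
      set x' := fun j => q j / lam with hx'
      set y' := fun i => -p i / lam with hy'
      have hx'0 : ∀ j, 0 ≤ x' j := fun j => div_nonneg (hcol4 j) hpos.le
      have hx'A : A.mulVec x' = b := by
        funext k
        simp only [Matrix.mulVec, dotProduct, hx']
        have : ∑ j, A k j * (q j / lam) = (∑ j, q j * A k j) / lam := by
          rw [Finset.sum_div]
          apply Finset.sum_congr rfl
          intro j _
          ring
        rw [this, hAq k]
        field_simp
      have hy'feas : ∀ j, Matrix.vecMul y' A j ≤ c j := by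
        intro j
        simp only [Matrix.vecMul, dotProduct, hy']
        have e : ∑ i, -p i / lam * A i j = -(∑ i, p i * A i j) / lam := by
          rw [neg_div, Finset.sum_div, ← Finset.sum_neg_distrib]
          apply Finset.sum_congr rfl
          intro i _
          ring
        rw [e]
        rw [div_le_iff₀ hpos]
        nlinarith [hcol1 j]
      have hwd := weak_duality hx'0 hx'A hy'feas
      -- b ⬝ y' ≤ c ⬝ x' gives 0 ≤ b⬝p + c⬝q, contradiction
      have e1 : b ⬝ᵥ y' = -(b ⬝ᵥ p) / lam := by
        simp only [dotProduct, hy']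
        rw [neg_div, Finset.sum_div, ← Finset.sum_neg_distrib]
        apply Finset.sum_congr rfl
        intro i _
        ring
      have e2 : c ⬝ᵥ x' = (c ⬝ᵥ q) / lam := by
        simp only [dotProduct, hx', Finset.sum_div]
        apply Finset.sum_congr rfl
        intro j _
        ring
      rw [e1, e2, div_le_div_iff₀ hpos hpos] at hwd
      nlinarith [hwd]
    · -- λ = 0
      have hl0 : lam = 0 := hzero.symm
      have h1 : 0 ≤ b ⬝ᵥ p := by
        have : b ⬝ᵥ p = ∑ j, x₀ j * (∑ i, p i * A i j) := by
          rw [← hx₀A]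
          simp only [Matrix.mulVec, dotProduct, Finset.sum_mul]
          rw [Finset.sum_comm]
          apply Finset.sum_congr rfl
          intro j _
          rw [Finset.mul_sum]
          apply Finset.sum_congr rfl
          intro i _
          ring
        rw [this]
        apply Finset.sum_nonneg
        intro j _
        apply mul_nonneg (hx₀0 j)
        have := hcol1 j
        rw [hl0] at this
        linarith
      have h2 : 0 ≤ c ⬝ᵥ q := by
        have hq0 : ∀ k, ∑ j, q j * A k j = 0 := by
          intro k
          have := hAq k
          rw [hl0] at this
          linarith
        have hle : Matrix.vecMul y₀ A ⬝ᵥ q ≤ c ⬝ᵥ q := by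
          apply Finset.sum_le_sum
          intro j _
          exact mul_le_mul_of_nonneg_right (hy₀ j) (hcol4 j)
        have heq : Matrix.vecMul y₀ A ⬝ᵥ q = 0 := by
          simp only [Matrix.vecMul, dotProduct, Finset.sum_mul]
          rw [Finset.sum_comm]
          apply Finset.sum_eq_zero
          intro i _
          calc ∑ j, y₀ i * A i j * q j = y₀ i * ∑ j, q j * A i j := by
                rw [Finset.mul_sum]
                apply Finset.sum_congr rfl
                intro j _
                ring
          _ = 0 := by rw [hq0 i, mul_zero]
        rw [heq] at hle
        exact hle
      linarith


/-- Weak duality for the restricted LP. -/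
theorem lp_weak_duality {l m nc : ℕ} {cC : Fin nc → ℝ} {CC : Matrix (Fin l) (Fin nc) ℝ}
    {AC : Matrix (Fin m) (Fin nc) ℝ} {ζ : Fin l → ℝ} {β : Fin m → ℝ} {x : Fin nc → ℝ}
    {u : Fin l → ℝ} {v : Fin m → ℝ}
    (hx : LPfeas CC AC ζ β x) (huv : (u, v) ∈ PD cC CC AC) :
    ζ ⬝ᵥ u + β ⬝ᵥ v ≤ cC ⬝ᵥ x := by
  obtain ⟨hx0, hxC, hxA⟩ := hx
  obtain ⟨hu, hcon⟩ := huv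
  have h1 : ζ ⬝ᵥ u ≤ CC.mulVec x ⬝ᵥ u := by
    apply Finset.sum_le_sum
    intro i _
    exact mul_le_mul_of_nonpos_right (hxC i) (hu i)
  have h2 : CC.mulVec x ⬝ᵥ u + β ⬝ᵥ v =
      (CC.transpose.mulVec u + AC.transpose.mulVec v) ⬝ᵥ x := by
    rw [← hxA, add_dotProduct]
    congr 1
    · rw [Matrix.mulVec_transpose, ← Matrix.dotProduct_mulVec, dotProduct_comm]
    · rw [Matrix.mulVec_transpose, ← Matrix.dotProduct_mulVec, dotProduct_comm]
  have h3 : (CC.transpose.mulVec u + AC.transpose.mulVec v) ⬝ᵥ x ≤ cC ⬝ᵥ x := by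
    apply Finset.sum_le_sum
    intro j _
    exact mul_le_mul_of_nonneg_right (hcon j) (hx0 j)
  linarith

/-- Strong duality for the restricted LP. -/
theorem lp_strong_duality {l m nc : ℕ} (cC : Fin nc → ℝ) (CC : Matrix (Fin l) (Fin nc) ℝ)
    (AC : Matrix (Fin m) (Fin nc) ℝ) (β : Fin m → ℝ) (ζ : Fin l → ℝ)
    (hζ : ζ ∈ CLP CC AC β) (hPD : (PD cC CC AC).Nonempty) :
    ∃ (x : Fin nc → ℝ) (u : Fin l → ℝ) (v : Fin m → ℝ),
      LPfeas CC AC ζ β x ∧ (u, v) ∈ PD cC CC AC ∧ cC ⬝ᵥ x = ζ ⬝ᵥ u + β ⬝ᵥ v ∧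
      zLP cC CC AC ζ β = ((cC ⬝ᵥ x : ℝ) : EReal) := by
  classical
  set B : Matrix (Fin l ⊕ Fin m) (Fin nc ⊕ Fin l) ℝ := fun i j =>
    match i, j with
    | Sum.inl i, Sum.inl j => CC i j
    | Sum.inl i, Sum.inr k => if i = k then 1 else 0
    | Sum.inr i, Sum.inl j => AC i j
    | Sum.inr _, Sum.inr _ => 0
    with hB
  set rv : Fin l ⊕ Fin m → ℝ := Sum.elim ζ β with hrv
  set cv : Fin nc ⊕ Fin l → ℝ := Sum.elim cC 0 with hcv
  have hP : ∃ X : (Fin nc ⊕ Fin l) → ℝ, (∀ j, 0 ≤ X j) ∧ B.mulVec X = rv := by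
    obtain ⟨x, hx0, hxC, hxA⟩ := hζ
    refine ⟨Sum.elim x (fun i => ζ i - CC.mulVec x i), ?_, ?_⟩
    · intro j
      cases j with
      | inl j => exact hx0 j
      | inr i => simp only [Sum.elim_inr]; linarith [hxC i]
    · funext i
      cases i with
      | inl i =>
        simp only [hB, Matrix.mulVec, dotProduct, Fintype.sum_sum_type, hrv,
          Sum.elim_inl, Sum.elim_inr, ite_mul, one_mul, zero_mul,
          Finset.sum_ite_eq, Finset.mem_univ, if_true]
        ring
      | inr i =>
        simp only [hB, Matrix.mulVec, dotProduct, Fintype.sum_sum_type, hrv,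
          Sum.elim_inl, Sum.elim_inr, zero_mul, Finset.sum_const_zero, add_zero]
        have := congrFun hxA i
        simpa [Matrix.mulVec, dotProduct] using this
  have hD : ∃ Y : (Fin l ⊕ Fin m) → ℝ, ∀ j, Matrix.vecMul Y B j ≤ cv j := by
    obtain ⟨⟨u, v⟩, hu, hcon⟩ := hPD
    refine ⟨Sum.elim u v, ?_⟩
    intro j
    cases j with
    | inl j =>
      have := hcon j
      simp only [hB, Matrix.vecMul, dotProduct, Fintype.sum_sum_type, hcv,
        Sum.elim_inl, Sum.elim_inr]
      simp only [Matrix.mulVec, dotProduct, Matrix.transpose_apply, Pi.add_apply] at this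
      calc (∑ i, u i * CC i j) + ∑ i, v i * AC i j
          = (∑ i, CC i j * u i) + ∑ i, AC i j * v i := by
            congr 1 <;> exact Finset.sum_congr rfl fun i _ => mul_comm _ _
      _ ≤ cC j := this
    | inr k =>
      simp only [hB, Matrix.vecMul, dotProduct, Fintype.sum_sum_type, hcv,
        Sum.elim_inl, Sum.elim_inr, mul_ite, mul_one, mul_zero, Finset.sum_ite_eq',
        Finset.mem_univ, if_true, zero_mul, Finset.sum_const_zero, add_zero, Pi.zero_apply]
      exact hu k
  obtain ⟨X, Y, ⟨hX0, hXB⟩, hYfeas, hobj⟩ := strong_duality B rv cv hP hD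
  set x := fun j => X (Sum.inl j) with hx
  set s := fun i => X (Sum.inr i) with hs
  set u := fun i => Y (Sum.inl i) with hu
  set v := fun i => Y (Sum.inr i) with hv
  have hxfeas : LPfeas CC AC ζ β x := by
    refine ⟨fun j => hX0 _, ?_, ?_⟩
    · intro i
      have := congrFun hXB (Sum.inl i)
      simp only [hB, Matrix.mulVec, dotProduct, Fintype.sum_sum_type, hrv,
        Sum.elim_inl, ite_mul, one_mul, zero_mul, Finset.sum_ite_eq, Finset.mem_univ,
        if_true] at this
      have hsnn := hX0 (Sum.inr i)
      simp only [Matrix.mulVec, dotProduct, hx]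
      linarith [this]
    · funext i
      have := congrFun hXB (Sum.inr i)
      simp only [hB, Matrix.mulVec, dotProduct, Fintype.sum_sum_type, hrv,
        Sum.elim_inr, zero_mul, Finset.sum_const_zero, add_zero] at this
      simp only [Matrix.mulVec, dotProduct, hx]
      exact this
  have huvPD : (u, v) ∈ PD cC CC AC := by
    constructor
    · intro k
      have := hYfeas (Sum.inr k)
      simp only [hB, Matrix.vecMul, dotProduct, Fintype.sum_sum_type, hcv,
        Sum.elim_inr, mul_ite, mul_one, mul_zero, Finset.sum_ite_eq', Finset.mem_univ,
        if_true, zero_mul, mul_zero, Finset.sum_const_zero, add_zero, Pi.zero_apply] at this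
      exact this
    · intro j
      have := hYfeas (Sum.inl j)
      simp only [hB, Matrix.vecMul, dotProduct, Fintype.sum_sum_type, hcv,
        Sum.elim_inl] at this
      simp only [Matrix.mulVec, dotProduct, Matrix.transpose_apply, Pi.add_apply,
        hu, hv]
      calc (∑ i, CC i j * Y (Sum.inl i)) + ∑ i, AC i j * Y (Sum.inr i)
          = (∑ i, Y (Sum.inl i) * CC i j) + ∑ i, Y (Sum.inr i) * AC i j := by
            congr 1 <;> exact Finset.sum_congr rfl fun i _ => mul_comm _ _
      _ ≤ cC j := this
  have hobj' : cC ⬝ᵥ x = ζ ⬝ᵥ u + β ⬝ᵥ v := by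
    have e1 : cv ⬝ᵥ X = cC ⬝ᵥ x := by
      simp [hcv, dotProduct, Fintype.sum_sum_type, hx]
    have e2 : rv ⬝ᵥ Y = ζ ⬝ᵥ u + β ⬝ᵥ v := by
      simp [hrv, dotProduct, Fintype.sum_sum_type, hu, hv]
    rw [← e1, ← e2]; exact hobj
  refine ⟨x, u, v, hxfeas, huvPD, hobj', ?_⟩
  apply le_antisymm
  · exact sInf_le ⟨x, hxfeas, rfl⟩
  · apply le_sInf
    rintro y ⟨x', hx', rfl⟩
    rw [EReal.coe_le_coe_iff]
    rw [hobj']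
    exact lp_weak_duality hx' huvPD

theorem zLP_infeasible {l m nc : ℕ} (cC : Fin nc → ℝ) (CC : Matrix (Fin l) (Fin nc) ℝ)
    (AC : Matrix (Fin m) (Fin nc) ℝ) (β : Fin m → ℝ) (ζ : Fin l → ℝ)
    (hζ : ζ ∉ CLP CC AC β) : zLP cC CC AC ζ β = ⊤ := by
  have : {y : EReal | ∃ x : Fin nc → ℝ, LPfeas CC AC ζ β x ∧ y = ((cC ⬝ᵥ x : ℝ) : EReal)} = ∅ := by
    ext y
    simp only [Set.mem_setOf_eq, Set.mem_empty_iff_false, iff_false]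
    rintro ⟨x, hx, _⟩
    exact hζ ⟨x, hx⟩
  rw [zLP, this, sInf_empty]

end AuxLP

set_option maxHeartbeats 1000000 in
theorem stmt_4 {l m nc : ℕ} (cC : Fin nc → ℝ) (CC : Matrix (Fin l) (Fin nc) ℝ) (AC : Matrix (Fin m) (Fin nc) ℝ)
    (β : Fin m → ℝ)
    (hPD : (PD cC CC AC).Nonempty)
    (ζ : Fin l → ℝ) (hζ : ζ ∈ CLP CC AC β) (d : Fin l → ℝ) :
    ((∀ t : ℝ, 0 < t → ζ + t • d ∉ CLP CC AC β) →
      HasDirDeriv (fun ζ' => zLP cC CC AC ζ' β) ζ d ⊤) ∧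
    ((∃ t : ℝ, 0 < t ∧ ζ + t • d ∈ CLP CC AC β) →
      (∃ ε > (0 : ℝ), ∀ t ∈ Set.Icc (0 : ℝ) ε, ζ + t • d ∈ CLP CC AC β) ∧
      ∃ L : ℝ, HasDirDeriv (fun ζ' => zLP cC CC AC ζ' β) ζ d (L : EReal) ∧
        (∃ u ∈ projOPT cC CC AC ζ β, u ⬝ᵥ d = L) ∧
        ∀ u ∈ projOPT cC CC AC ζ β, u ⬝ᵥ d ≤ L) := by
  classical
  obtain ⟨xx, uu0, vv0, hxxfeas, huv0, hxxobj, hxxz⟩ :=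
    lp_strong_duality cC CC AC β ζ hζ hPD
  constructor
  · -- Part (i)
    intro hinf
    have hev : ∀ᶠ t in 𝓝[>] (0:ℝ),
        ((t⁻¹ : ℝ) : EReal) * (zLP cC CC AC (ζ + t • d) β - zLP cC CC AC ζ β) = ⊤ := by
      filter_upwards [self_mem_nhdsWithin] with t ht
      rw [zLP_infeasible cC CC AC β _ (hinf t ht), hxxz, EReal.top_sub_coe,
        EReal.mul_top_of_pos]
      exact_mod_cast inv_pos.2 ht
    exact Tendsto.congr' (hev.mono fun t h => h.symm) tendsto_const_nhds
  · -- Part (ii)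
    rintro ⟨t₀, ht₀pos, ht₀⟩
    -- Step A: feasibility on [0, t₀]
    have hIcc : ∀ t ∈ Set.Icc (0:ℝ) t₀, ζ + t • d ∈ CLP CC AC β := by
      rintro t ⟨ht0, htt⟩
      obtain ⟨x₀, hx₀0, hx₀C, hx₀A⟩ := hζ
      obtain ⟨x₁, hx₁0, hx₁C, hx₁A⟩ := ht₀
      set θ := t / t₀ with hθ
      have hθ0 : 0 ≤ θ := div_nonneg ht0 ht₀pos.le
      have hθ1 : θ ≤ 1 := (div_le_one ht₀pos).2 htt
      refine ⟨(1 - θ) • x₀ + θ • x₁, fun j => ?_, ?_, ?_⟩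
      · have := hx₀0 j; have := hx₁0 j
        simp only [Pi.add_apply, Pi.smul_apply, smul_eq_mul]
        nlinarith
      · intro i
        have h1 := hx₀C i
        have h2 := hx₁C i
        have hts : θ * t₀ = t := by rw [hθ]; field_simp
        simp only [Matrix.mulVec_add, Matrix.mulVec_smul, Pi.add_apply, Pi.smul_apply,
          smul_eq_mul] at h1 h2 ⊢
        linarith [mul_le_mul_of_nonneg_left h1 (by linarith : (0:ℝ) ≤ 1 - θ),
          mul_le_mul_of_nonneg_left h2 hθ0,
          (by rw [← hts] : t * d i = θ * t₀ * d i)]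
      · rw [Matrix.mulVec_add, Matrix.mulVec_smul, Matrix.mulVec_smul, hx₀A, hx₁A]
        funext i
        simp only [Pi.add_apply, Pi.smul_apply, smul_eq_mul]
        ring
    refine ⟨⟨t₀, ht₀pos, hIcc⟩, ?_⟩
    -- optimal solutions on [0, t₀]
    have H : ∀ t, t ∈ Set.Icc (0:ℝ) t₀ →
        ∃ (x : Fin nc → ℝ) (u : Fin l → ℝ) (v : Fin m → ℝ),
          LPfeas CC AC (ζ + t • d) β x ∧ (u, v) ∈ PD cC CC AC ∧
          cC ⬝ᵥ x = (ζ + t • d) ⬝ᵥ u + β ⬝ᵥ v ∧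
          zLP cC CC AC (ζ + t • d) β = ((cC ⬝ᵥ x : ℝ) : EReal) :=
      fun t ht => lp_strong_duality cC CC AC β (ζ + t • d) (hIcc t ht) hPD
    choose X U V hXfeas hUVmem hXobj hXz using H
    have h0mem : (0:ℝ) ∈ Set.Icc (0:ℝ) t₀ := ⟨le_rfl, ht₀pos.le⟩
    set g : ℝ → ℝ := fun t => if ht : t ∈ Set.Icc (0:ℝ) t₀ then cC ⬝ᵥ X t ht else 0 with hg
    have hgz : ∀ t (ht : t ∈ Set.Icc (0:ℝ) t₀),
        zLP cC CC AC (ζ + t • d) β = ((g t : ℝ) : EReal) := by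
      intro t ht
      rw [hg]; simp only [dif_pos ht]; exact hXz t ht
    have hgle : ∀ t (ht : t ∈ Set.Icc (0:ℝ) t₀) (x : Fin nc → ℝ),
        LPfeas CC AC (ζ + t • d) β x → g t ≤ cC ⬝ᵥ x := by
      intro t ht x hx
      have h1 : zLP cC CC AC (ζ + t • d) β ≤ ((cC ⬝ᵥ x : ℝ) : EReal) := sInf_le ⟨x, hx, rfl⟩
      rw [hgz t ht] at h1
      exact_mod_cast h1
    have hgeq : ∀ t (ht : t ∈ Set.Icc (0:ℝ) t₀), g t = cC ⬝ᵥ X t ht := by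
      intro t ht; rw [hg]; simp only [dif_pos ht]
    -- key: for dual feasible (u,v), (ζ+t•d)⬝u + β⬝v ≤ g t
    have hwd : ∀ t (ht : t ∈ Set.Icc (0:ℝ) t₀) (u : Fin l → ℝ) (v : Fin m → ℝ),
        (u, v) ∈ PD cC CC AC → (ζ + t • d) ⬝ᵥ u + β ⬝ᵥ v ≤ g t := by
      intro t ht u v huv
      rw [hgeq t ht]
      exact lp_weak_duality (hXfeas t ht) huv
    have hζ0 : ζ + (0:ℝ) • d = ζ := by simp
    -- the slope function
    set q : ℝ → ℝ := fun t => (g t - g 0) / t with hq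
    have hdot : ∀ (t : ℝ) (u : Fin l → ℝ), (ζ + t • d) ⬝ᵥ u = ζ ⬝ᵥ u + t * (d ⬝ᵥ u) := by
      intro t u
      rw [add_dotProduct, smul_dotProduct, smul_eq_mul]
    -- lower bound on slopes from optimal-face dual points
    have hq_lb : ∀ (u : Fin l → ℝ) (v : Fin m → ℝ), (u, v) ∈ PD cC CC AC →
        ζ ⬝ᵥ u + β ⬝ᵥ v = g 0 → ∀ t, 0 < t → t ≤ t₀ → d ⬝ᵥ u ≤ q t := by
      intro u v huv hface t ht0 htt
      have h1 := hwd t ⟨ht0.le, htt⟩ u v huv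
      rw [hdot] at h1
      rw [hq]
      rw [le_div_iff₀ ht0]
      linarith
    -- monotonicity of slopes
    have hq_mono : ∀ s t : ℝ, 0 < s → s ≤ t → t ≤ t₀ → q s ≤ q t := by
      intro s t hs0 hst htt
      have ht0 : 0 < t := lt_of_lt_of_le hs0 hst
      have hsmem : s ∈ Set.Icc (0:ℝ) t₀ := ⟨hs0.le, hst.trans htt⟩
      have htmem : t ∈ Set.Icc (0:ℝ) t₀ := ⟨ht0.le, htt⟩
      set σ := s / t with hσ
      have hσ0 : 0 ≤ σ := div_nonneg hs0.le ht0.le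
      have hσ1 : σ ≤ 1 := (div_le_one ht0).2 hst
      have hσt : σ * t = s := by rw [hσ]; field_simp
      -- convex combination of optimal solutions
      have hfeas : LPfeas CC AC (ζ + s • d) β ((1 - σ) • X 0 h0mem + σ • X t htmem) := by
        obtain ⟨ha0, haC, haA⟩ := hXfeas 0 h0mem
        obtain ⟨hb0, hbC, hbA⟩ := hXfeas t htmem
        rw [hζ0] at haC
        refine ⟨fun j => ?_, ?_, ?_⟩
        · have := ha0 j; have := hb0 j
          simp only [Pi.add_apply, Pi.smul_apply, smul_eq_mul]
          nlinarith
        · intro i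
          have h1 := haC i
          have h2 := hbC i
          simp only [Matrix.mulVec_add, Matrix.mulVec_smul, Pi.add_apply, Pi.smul_apply,
            smul_eq_mul] at h1 h2 ⊢
          linarith [mul_le_mul_of_nonneg_left h1 (by linarith : (0:ℝ) ≤ 1 - σ),
            mul_le_mul_of_nonneg_left h2 hσ0,
            (by rw [← hσt] : s * d i = σ * t * d i)]
        · rw [Matrix.mulVec_add, Matrix.mulVec_smul, Matrix.mulVec_smul, haA, hbA]
          funext i
          simp only [Pi.add_apply, Pi.smul_apply, smul_eq_mul]
          ring
      have hval := hgle s hsmem _ hfeas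
      have hcc : cC ⬝ᵥ ((1 - σ) • X 0 h0mem + σ • X t htmem) = (1 - σ) * g 0 + σ * g t := by
        rw [dotProduct_add, dotProduct_smul, dotProduct_smul, hgeq 0 h0mem, hgeq t htmem]
        simp [smul_eq_mul]
      rw [hcc] at hval
      have key : g s - g 0 ≤ σ * (g t - g 0) := by nlinarith [hval]
      rw [hq, div_le_div_iff₀ hs0 ht0]
      linarith [mul_le_mul_of_nonneg_right key ht0.le,
        (by rw [← hσt]; ring : (g t - g 0) * s = σ * (g t - g 0) * t)]
    -- dual optimal at 0
    set u0 := U 0 h0mem with hu0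
    set v0 := V 0 h0mem with hv0
    have hface0 : ζ ⬝ᵥ u0 + β ⬝ᵥ v0 = g 0 := by
      have := hXobj 0 h0mem
      rw [hζ0] at this
      rw [hgeq 0 h0mem, this]
    -- define L
    have hQne : (q '' Set.Ioc 0 t₀).Nonempty := ⟨q t₀, t₀, ⟨ht₀pos, le_rfl⟩, rfl⟩
    have hQbdd : BddBelow (q '' Set.Ioc 0 t₀) := by
      refine ⟨d ⬝ᵥ u0, ?_⟩
      rintro _ ⟨t, ⟨ht0, htt⟩, rfl⟩
      exact hq_lb u0 v0 (hUVmem 0 h0mem) hface0 t ht0 htt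
    set L := sInf (q '' Set.Ioc 0 t₀) with hL
    have hLleq : ∀ t, 0 < t → t ≤ t₀ → L ≤ q t := by
      intro t ht0 htt
      exact csInf_le hQbdd ⟨t, ⟨ht0, htt⟩, rfl⟩
    have hleL : ∀ (u : Fin l → ℝ) (v : Fin m → ℝ), (u, v) ∈ PD cC CC AC →
        ζ ⬝ᵥ u + β ⬝ᵥ v = g 0 → d ⬝ᵥ u ≤ L := by
      intro u v huv hface
      apply le_csInf hQne
      rintro _ ⟨t, ⟨ht0, htt⟩, rfl⟩
      exact hq_lb u v huv hface t ht0 htt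
    -- (a) : all members of projOPT have slope ≤ L
    have hfaceiff : ∀ u, u ∈ projOPT cC CC AC ζ β →
        ∃ v, (u, v) ∈ PD cC CC AC ∧ ζ ⬝ᵥ u + β ⬝ᵥ v = g 0 := by
      intro u ⟨v, huv, hval⟩
      refine ⟨v, huv, ?_⟩
      have h0 : zLP cC CC AC ζ β = ((g 0 : ℝ) : EReal) := by
        rw [← hζ0]; exact hgz 0 h0mem
      rw [h0] at hval
      exact_mod_cast hval
    have hpartA : ∀ u ∈ projOPT cC CC AC ζ β, u ⬝ᵥ d ≤ L := by
      intro u hu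
      obtain ⟨v, huv, hface⟩ := hfaceiff u hu
      rw [dotProduct_comm]
      exact hleL u v huv hface
    -- Tendsto q (𝓝[>] 0) (𝓝 L)
    have htendq : Tendsto q (𝓝[>] (0:ℝ)) (𝓝 L) := by
      rw [tendsto_order]
      constructor
      · intro a ha
        filter_upwards [Ioo_mem_nhdsGT_of_mem (Set.left_mem_Ico.2 ht₀pos)] with t ht
        exact lt_of_lt_of_le ha (hLleq t ht.1 ht.2.le)
      · intro b hb
        obtain ⟨y, ⟨t', ht'mem, rfl⟩, hy⟩ := exists_lt_of_csInf_lt hQne hb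
        filter_upwards [Ioo_mem_nhdsGT_of_mem (Set.left_mem_Ico.2 ht'mem.1)] with t ht
        exact lt_of_le_of_lt (hq_mono t t' ht.1 ht.2.le ht'mem.2) hy
    -- HasDirDeriv with L
    have hdir : HasDirDeriv (fun ζ' => zLP cC CC AC ζ' β) ζ d (L : EReal) := by
      rw [HasDirDeriv]
      have hev : ∀ᶠ t in 𝓝[>] (0:ℝ),
          ((q t : ℝ) : EReal) =
            ((t⁻¹ : ℝ) : EReal) * (zLP cC CC AC (ζ + t • d) β - zLP cC CC AC ζ β) := by
        filter_upwards [Ioo_mem_nhdsGT_of_mem (Set.left_mem_Ico.2 ht₀pos)] with t ht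
        rw [hgz t ⟨ht.1.le, ht.2.le⟩, show zLP cC CC AC ζ β = ((g 0 : ℝ) : EReal) by
          rw [← hζ0]; exact hgz 0 h0mem]
        rw [← EReal.coe_sub, ← EReal.coe_mul]
        congr 1
        rw [hq]
        field_simp
      refine Tendsto.congr' hev ?_
      exact (EReal.tendsto_coe).2 htendq
    -- attainment: the face LP
    have hzζ : zLP cC CC AC ζ β = ((g 0 : ℝ) : EReal) := by
      rw [← hζ0]; exact hgz 0 h0mem
    set g0 := g 0 with hg0def
    set A' : Matrix (Fin l ⊕ Fin m) (Fin l ⊕ Fin nc ⊕ Unit ⊕ Unit) ℝ := fun i j =>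
      match i, j with
      | Sum.inl i, Sum.inl k => if i = k then 1 else 0
      | Sum.inr _, Sum.inl _ => 0
      | Sum.inl i, Sum.inr (Sum.inl j) => CC i j
      | Sum.inr i, Sum.inr (Sum.inl j) => AC i j
      | Sum.inl i, Sum.inr (Sum.inr (Sum.inl _)) => ζ i
      | Sum.inr i, Sum.inr (Sum.inr (Sum.inl _)) => β i
      | Sum.inl i, Sum.inr (Sum.inr (Sum.inr _)) => -ζ i
      | Sum.inr i, Sum.inr (Sum.inr (Sum.inr _)) => -β i
      with hA'
    set c' : Fin l ⊕ Fin nc ⊕ Unit ⊕ Unit → ℝ :=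
      Sum.elim 0 (Sum.elim cC (Sum.elim (fun _ => g0) (fun _ => -g0))) with hc'
    set b' : Fin l ⊕ Fin m → ℝ := Sum.elim d 0 with hb'
    -- translation of dual feasibility for the face LP
    have hYiff : ∀ Y : Fin l ⊕ Fin m → ℝ,
        (∀ j, Matrix.vecMul Y A' j ≤ c' j) ↔
        (((fun i => Y (Sum.inl i)), (fun i => Y (Sum.inr i))) ∈ PD cC CC AC ∧
          ζ ⬝ᵥ (fun i => Y (Sum.inl i)) + β ⬝ᵥ (fun i => Y (Sum.inr i)) = g0) := by
      intro Y
      constructor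
      · intro hY
        refine ⟨⟨fun k => ?_, fun j => ?_⟩, ?_⟩
        · have := hY (Sum.inl k)
          simpa [hA', hc', Matrix.vecMul, dotProduct, Fintype.sum_sum_type,
            mul_ite, mul_one, mul_zero, Finset.sum_ite_eq', Finset.mem_univ] using this
        · have := hY (Sum.inr (Sum.inl j))
          simp only [hA', hc', Matrix.vecMul, dotProduct, Fintype.sum_sum_type,
            Sum.elim_inl, Sum.elim_inr] at this
          simp only [Matrix.mulVec, dotProduct, Matrix.transpose_apply, Pi.add_apply]
          calc (∑ i, CC i j * Y (Sum.inl i)) + ∑ i, AC i j * Y (Sum.inr i)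
              = (∑ i, Y (Sum.inl i) * CC i j) + ∑ i, Y (Sum.inr i) * AC i j := by
                congr 1 <;> exact Finset.sum_congr rfl fun i _ => mul_comm _ _
          _ ≤ cC j := this
        · have h1 := hY (Sum.inr (Sum.inr (Sum.inl ())))
          have h2 := hY (Sum.inr (Sum.inr (Sum.inr ())))
          simp only [hA', hc', Matrix.vecMul, dotProduct, Fintype.sum_sum_type,
            Sum.elim_inl, Sum.elim_inr, mul_neg, Finset.sum_neg_distrib] at h1 h2
          simp only [dotProduct]
          have e1 : ∀ i, ζ i * Y (Sum.inl i) = Y (Sum.inl i) * ζ i := fun i => mul_comm _ _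
          have e2 : ∀ i, β i * Y (Sum.inr i) = Y (Sum.inr i) * β i := fun i => mul_comm _ _
          simp only [e1, e2]
          linarith [h1, h2]
      · rintro ⟨⟨hu, hcon⟩, hface⟩
        intro j
        cases j with
        | inl k =>
          simpa [hA', hc', Matrix.vecMul, dotProduct, Fintype.sum_sum_type,
            mul_ite, mul_one, mul_zero, Finset.sum_ite_eq', Finset.mem_univ] using hu k
        | inr j' =>
          cases j' with
          | inl j =>
            have := hcon j
            simp only [Matrix.mulVec, dotProduct, Matrix.transpose_apply,
              Pi.add_apply] at this
            simp only [hA', hc', Matrix.vecMul, dotProduct, Fintype.sum_sum_type,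
              Sum.elim_inl, Sum.elim_inr]
            calc (∑ i, Y (Sum.inl i) * CC i j) + ∑ i, Y (Sum.inr i) * AC i j
                = (∑ i, CC i j * Y (Sum.inl i)) + ∑ i, AC i j * Y (Sum.inr i) := by
                  congr 1 <;> exact Finset.sum_congr rfl fun i _ => mul_comm _ _
            _ ≤ cC j := this
          | inr j'' =>
            simp only [dotProduct] at hface
            cases j'' with
            | inl _ =>
              simp only [hA', hc', Matrix.vecMul, dotProduct, Fintype.sum_sum_type,
                Sum.elim_inl, Sum.elim_inr]
              have e1 : ∀ i, Y (Sum.inl i) * ζ i = ζ i * Y (Sum.inl i) := fun i => mul_comm _ _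
              have e2 : ∀ i, Y (Sum.inr i) * β i = β i * Y (Sum.inr i) := fun i => mul_comm _ _
              simp only [e1, e2]
              linarith [hface]
            | inr _ =>
              simp only [hA', hc', Matrix.vecMul, dotProduct, Fintype.sum_sum_type,
                Sum.elim_inl, Sum.elim_inr, mul_neg, Finset.sum_neg_distrib]
              have e1 : ∀ i, Y (Sum.inl i) * ζ i = ζ i * Y (Sum.inl i) := fun i => mul_comm _ _
              have e2 : ∀ i, Y (Sum.inr i) * β i = β i * Y (Sum.inr i) := fun i => mul_comm _ _
              simp only [e1, e2]
              linarith [hface]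
    have hD' : ∃ Y : Fin l ⊕ Fin m → ℝ, ∀ j, Matrix.vecMul Y A' j ≤ c' j := by
      refine ⟨Sum.elim u0 v0, (hYiff _).2 ?_⟩
      exact ⟨hUVmem 0 h0mem, hface0⟩
    have hP' : ∃ X : (Fin l ⊕ Fin nc ⊕ Unit ⊕ Unit) → ℝ, (∀ j, 0 ≤ X j) ∧ A'.mulVec X = b' := by
      by_contra hcon
      obtain ⟨Z, hZ1, hZ2⟩ := farkas A' b' hcon
      set δu := fun i => Z (Sum.inl i) with hδu
      set δv := fun i => Z (Sum.inr i) with hδv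
      have hδu0 : ∀ k, 0 ≤ δu k := by
        intro k
        have := hZ1 (Sum.inl k)
        simpa [hA', Matrix.vecMul, dotProduct, Fintype.sum_sum_type,
          mul_ite, mul_one, mul_zero, Finset.sum_ite_eq', Finset.mem_univ] using this
      have hδcon : ∀ j, 0 ≤ (∑ i, δu i * CC i j) + ∑ i, δv i * AC i j := by
        intro j
        have := hZ1 (Sum.inr (Sum.inl j))
        simpa [hA', Matrix.vecMul, dotProduct, Fintype.sum_sum_type, hδu, hδv]
          using this
      have hδf1 : 0 ≤ (∑ i, δu i * ζ i) + ∑ i, δv i * β i := by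
        have := hZ1 (Sum.inr (Sum.inr (Sum.inl ())))
        simpa [hA', Matrix.vecMul, dotProduct, Fintype.sum_sum_type, hδu, hδv]
          using this
      have hδf2 : (∑ i, δu i * ζ i) + ∑ i, δv i * β i ≤ 0 := by
        have := hZ1 (Sum.inr (Sum.inr (Sum.inr ())))
        simp only [hA', Matrix.vecMul, dotProduct, Fintype.sum_sum_type, hδu, hδv,
          mul_neg, Finset.sum_neg_distrib] at this
        linarith [this]
      have hδd : d ⬝ᵥ δu < 0 := by
        simp only [hb', dotProduct, Fintype.sum_sum_type, Sum.elim_inl, Sum.elim_inr,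
          zero_mul, Finset.sum_const_zero, add_zero] at hZ2
        simpa [dotProduct, hδu] using hZ2
      -- build points of projOPT with arbitrarily large d-value
      set ρ := -(d ⬝ᵥ δu) with hρ
      have hρpos : 0 < ρ := by rw [hρ]; linarith
      set τ := |L + 1 - d ⬝ᵥ u0| / ρ with hτ
      have hτ0 : 0 ≤ τ := div_nonneg (abs_nonneg _) hρpos.le
      have hmem : ((fun i => u0 i - τ * δu i), (fun i => v0 i - τ * δv i)) ∈ PD cC CC AC := by
        obtain ⟨hu0le, hcon0⟩ := hUVmem 0 h0mem
        constructor
        · intro k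
          have h1 := hu0le k
          have h2 := hδu0 k
          simp only [hu0] at h1 ⊢
          have : 0 ≤ τ * δu k := mul_nonneg hτ0 h2
          simp only [Pi.zero_apply] at h1 ⊢
          linarith
        · intro j
          have h1 := hcon0 j
          have h2 := hδcon j
          simp only [Matrix.mulVec, dotProduct, Matrix.transpose_apply,
            Pi.add_apply, hu0, hv0] at h1 ⊢
          have t1 : ∑ i, CC i j * (τ * δu i) = τ * ∑ i, δu i * CC i j := by
            rw [Finset.mul_sum]; exact Finset.sum_congr rfl fun i _ => by ring
          have t2 : ∑ i, AC i j * (τ * δv i) = τ * ∑ i, δv i * AC i j := by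
            rw [Finset.mul_sum]; exact Finset.sum_congr rfl fun i _ => by ring
          have e : (∑ i, CC i j * (U 0 h0mem i - τ * δu i)) +
              ∑ i, AC i j * (V 0 h0mem i - τ * δv i) =
              ((∑ i, CC i j * U 0 h0mem i) + ∑ i, AC i j * V 0 h0mem i) -
              τ * ((∑ i, δu i * CC i j) + ∑ i, δv i * AC i j) := by
            simp only [mul_sub, Finset.sum_sub_distrib, t1, t2]
            ring
          rw [e]
          have : 0 ≤ τ * ((∑ i, δu i * CC i j) + ∑ i, δv i * AC i j) := mul_nonneg hτ0 h2
          linarith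
      have hfacem : ζ ⬝ᵥ (fun i => u0 i - τ * δu i) + β ⬝ᵥ (fun i => v0 i - τ * δv i) = g 0 := by
        simp only [dotProduct, mul_sub, Finset.sum_sub_distrib] at *
        have e1 : ∑ i, ζ i * (τ * δu i) = τ * ∑ i, δu i * ζ i := by
          rw [Finset.mul_sum]; exact Finset.sum_congr rfl fun i _ => by ring
        have e2 : ∑ i, β i * (τ * δv i) = τ * ∑ i, δv i * β i := by
          rw [Finset.mul_sum]; exact Finset.sum_congr rfl fun i _ => by ring
        have e3 : (∑ i, δu i * ζ i) + ∑ i, δv i * β i = 0 := le_antisymm hδf2 hδf1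
        have := hface0
        rw [e1, e2]
        nlinarith [this, e3]
      have hbig := hleL _ _ hmem hfacem
      have hdval : d ⬝ᵥ (fun i => u0 i - τ * δu i) = d ⬝ᵥ u0 + τ * ρ := by
        simp only [dotProduct, mul_sub, Finset.sum_sub_distrib, hρ]
        have : ∑ i, d i * (τ * δu i) = τ * ∑ i, d i * δu i := by
          rw [Finset.mul_sum]; exact Finset.sum_congr rfl fun i _ => by ring
        rw [this]; ring
      rw [hdval] at hbig
      have : τ * ρ ≥ L + 1 - d ⬝ᵥ u0 := by
        rw [hτ, div_mul_cancel₀ _ hρpos.ne']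
        exact le_abs_self _
      linarith
    obtain ⟨Xs, Ys, ⟨hXs0, hXsA⟩, hYsfeas, hobjeq⟩ := strong_duality A' b' c' hP' hD'
    obtain ⟨hYsPD, hYsface⟩ := (hYiff Ys).1 hYsfeas
    set ustar := fun i => Ys (Sum.inl i) with hustar
    set vstar := fun i => Ys (Sum.inr i) with hvstar
    have hmemproj : ustar ∈ projOPT cC CC AC ζ β := by
      refine ⟨vstar, hYsPD, ?_⟩
      rw [hzζ, hYsface]
    -- extract the primal solution of the face LP
    set p := fun i => Xs (Sum.inl i) with hp
    set xs := fun j => Xs (Sum.inr (Sum.inl j)) with hxs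
    set σ₁ := Xs (Sum.inr (Sum.inr (Sum.inl ()))) with hσ₁
    set σ₂ := Xs (Sum.inr (Sum.inr (Sum.inr ()))) with hσ₂
    set μ := σ₁ - σ₂ with hμ
    have hxs0 : ∀ j, 0 ≤ xs j := fun j => hXs0 _
    have hrowl : ∀ i, CC.mulVec xs i ≤ d i - μ * ζ i := by
      intro i
      have := congrFun hXsA (Sum.inl i)
      simp only [hA', hb', Matrix.mulVec, dotProduct, Fintype.sum_sum_type,
        Sum.elim_inl, ite_mul, one_mul, zero_mul, Finset.sum_ite_eq, Finset.mem_univ,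
        if_true, neg_mul] at this
      have hpnn := hXs0 (Sum.inl i)
      simp only [Matrix.mulVec, dotProduct, hxs, hμ]
      simp only [Fintype.sum_unique] at this
      nlinarith [this, hpnn]
    have hrowm : ∀ i, AC.mulVec xs i = -μ * β i := by
      intro i
      have := congrFun hXsA (Sum.inr i)
      simp only [hA', hb', Matrix.mulVec, dotProduct, Fintype.sum_sum_type,
        Sum.elim_inr, zero_mul, Finset.sum_const_zero, neg_mul, Pi.zero_apply] at this
      simp only [Matrix.mulVec, dotProduct, hxs, hμ]
      simp only [Fintype.sum_unique] at this
      linarith [this]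
    set Vv := d ⬝ᵥ ustar with hVv
    have hcost : cC ⬝ᵥ xs + μ * g0 = Vv := by
      have e1 : c' ⬝ᵥ Xs = cC ⬝ᵥ xs + μ * g0 := by
        simp only [hc', dotProduct, Fintype.sum_sum_type, Sum.elim_inl, Sum.elim_inr,
          Pi.zero_apply, zero_mul, Finset.sum_const_zero, zero_add, Fintype.sum_unique,
          hxs, hμ, hσ₁, hσ₂]
        ring
      have e2 : b' ⬝ᵥ Ys = Vv := by
        simp only [hb', hVv, dotProduct, Fintype.sum_sum_type, Sum.elim_inl,
          Sum.elim_inr, Pi.zero_apply, zero_mul, Finset.sum_const_zero, add_zero, hustar]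
      rw [← e1, ← e2, hobjeq]
    clear_value μ g0
    -- the scaling trick : L ≤ Vv
    have hLleV : L ≤ Vv := by
      obtain ⟨t, htpos, htμ, htt₀⟩ : ∃ t : ℝ, 0 < t ∧ t * μ ≤ 1 / 2 ∧ t ≤ t₀ / 2 := by
        refine ⟨min (1 / (2 * (|μ| + 1))) (t₀ / 2), ?_, ?_, min_le_right _ _⟩
        · apply lt_min
          · positivity
          · linarith
        · have h1 : min (1 / (2 * (|μ| + 1))) (t₀ / 2) ≤ 1 / (2 * (|μ| + 1)) := min_le_left _ _
          have h0 : 0 ≤ min (1 / (2 * (|μ| + 1))) (t₀ / 2) := le_min (by positivity) (by linarith)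
          have h2 : μ ≤ |μ| := le_abs_self μ
          have h4 : min (1 / (2 * (|μ| + 1))) (t₀ / 2) * μ ≤
              min (1 / (2 * (|μ| + 1))) (t₀ / 2) * |μ| := mul_le_mul_of_nonneg_left h2 h0
          have h5 : min (1 / (2 * (|μ| + 1))) (t₀ / 2) * |μ| ≤ (1 / (2 * (|μ| + 1))) * |μ| :=
            mul_le_mul_of_nonneg_right h1 (abs_nonneg μ)
          have h6 : (1 / (2 * (|μ| + 1))) * |μ| ≤ 1 / 2 := by
            rw [div_mul_eq_mul_div, div_le_div_iff₀ (by positivity) (by norm_num)]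
            nlinarith [abs_nonneg μ]
          linarith
      have hden : (0:ℝ) < 1 - t * μ := by linarith
      obtain ⟨s, hsdef⟩ : ∃ s : ℝ, s = t / (1 - t * μ) := ⟨_, rfl⟩
      have hspos : 0 < s := hsdef ▸ div_pos htpos hden
      have hst : (1 - t * μ) * s = t := by
        rw [hsdef, mul_div_cancel₀ _ hden.ne']
      have hs2t : s ≤ 2 * t := by
        rw [hsdef, div_le_iff₀ hden]
        nlinarith [mul_le_mul_of_nonneg_left htμ htpos.le]
      have hst₀ : s ≤ t₀ := by linarith
      -- candidate at ζ + s • d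
      obtain ⟨ha0, haC, haA⟩ := hXfeas 0 h0mem
      rw [hζ0] at haC
      set yt := (1 - t * μ)⁻¹ • (X 0 h0mem + t • xs) with hyt
      have hytfeas : LPfeas CC AC (ζ + s • d) β yt := by
        refine ⟨fun j => ?_, fun i => ?_, ?_⟩
        · simp only [hyt, Pi.smul_apply, Pi.add_apply, smul_eq_mul]
          exact mul_nonneg (inv_pos.2 hden).le
            (add_nonneg (ha0 j) (mul_nonneg htpos.le (hxs0 j)))
        · simp only [hyt, Matrix.mulVec_smul, Matrix.mulVec_add, Pi.smul_apply,
            Pi.add_apply, smul_eq_mul]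
          rw [inv_mul_le_iff₀ hden]
          have h1 := haC i
          have h2 := hrowl i
          have e : (1 - t * μ) * ((ζ + s • d) i) = (1 - t * μ) * ζ i + t * d i := by
            simp only [Pi.add_apply, Pi.smul_apply, smul_eq_mul]
            rw [show (1 - t * μ) * (ζ i + s * d i) = (1 - t * μ) * ζ i + ((1 - t * μ) * s) * d i
              by ring, hst]
          simp only [Pi.add_apply, Pi.smul_apply, smul_eq_mul] at e ⊢
          rw [e]
          linarith [mul_le_mul_of_nonneg_left h2 htpos.le, h1]
        · funext i
          simp only [hyt, Matrix.mulVec_smul, Matrix.mulVec_add, Pi.smul_apply,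
            Pi.add_apply, smul_eq_mul]
          rw [congrFun haA i, hrowm i]
          field_simp
          ring
      have hgs := hgle s ⟨hspos.le, hst₀⟩ yt hytfeas
      have hcyt : cC ⬝ᵥ yt = (1 - t * μ)⁻¹ * (g 0 + t * (cC ⬝ᵥ xs)) := by
        simp only [hyt, dotProduct_smul, dotProduct_add, dotProduct_smul, smul_eq_mul,
          hgeq 0 h0mem]
      have hcx : cC ⬝ᵥ xs = Vv - μ * g0 := by linarith [hcost]
      have hrhs : (1 - t * μ)⁻¹ * (g 0 + t * (cC ⬝ᵥ xs)) = g 0 + s * Vv := by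
        rw [hcx, hsdef, ← hg0def]
        field_simp
        ring
      have hineq : g s ≤ g 0 + s * Vv := by
        rw [hcyt, hrhs] at hgs
        exact hgs
      have hqs : q s ≤ Vv := by
        rw [hq, div_le_iff₀ hspos]
        linarith [hineq]
      exact le_trans (hLleq s hspos hst₀) hqs
    have hVleL : Vv ≤ L := by
      have := hpartA ustar hmemproj
      rw [hVv, dotProduct_comm]
      exact this
    exact ⟨L, hdir, ⟨ustar, hmemproj, by rw [dotProduct_comm, ← hVv]; exact le_antisymm hVleL hLleV⟩,
      hpartA⟩
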